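/- The Shelah–Soifer graph has a minimal dominating set. -/

import Mathlib

/-- The Shelah–Soifer graph on `ℝ`: `x` and `y` are adjacent iff
`x - y ∈ (ℚ + √2) ∪ (ℚ + (-√2))`. -/
noncomputable def ShelahSoiferGraph : SimpleGraph ℝ where
  Adj x y := (∃ q : ℚ, x - y = q + Real.sqrt 2) ∨ (∃ q : ℚ, x - y = q - Real.sqrt 2)
  symm := by
    constructor
    rintro x y (⟨q, hq⟩ | ⟨q, hq⟩)
    · exact Or.inr ⟨-q, by push_cast; linarith⟩
    · exact Or.inl ⟨-q, by push_cast; linarith⟩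
  loopless := by
    constructor
    rintro x (⟨q, hq⟩ | ⟨q, hq⟩)
    · exact irrational_sqrt_two ⟨-q, by push_cast; linarith⟩
    · exact irrational_sqrt_two ⟨q, by push_cast; linarith⟩

/-- `D` is a dominating set of `G`. -/
def IsDomSet {V : Type*} (G : SimpleGraph V) (D : Set V) : Prop :=
  ∀ v : V, v ∈ D ∨ ∃ d ∈ D, G.Adj v d

/-- `D` is a minimal dominating set of `G`: a dominating set with no proper subset
that is a dominating set. -/
def IsMinDomSet {V : Type*} (G : SimpleGraph V) (D : Set V) : Prop :=
  IsDomSet G D ∧ ∀ D' : Set V, D' ⊂ D → ¬ IsDomSet G D'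


noncomputable def Hsub : AddSubgroup ℝ where
  carrier := {x | ∃ q : ℚ, ∃ n : ℤ, x = q + n * Real.sqrt 2}
  add_mem' := by rintro a b ⟨q, n, rfl⟩ ⟨q', n', rfl⟩
                 exact ⟨q + q', n + n', by push_cast; ring⟩
  zero_mem' := ⟨0, 0, by push_cast; ring⟩
  neg_mem' := by rintro a ⟨q, n, rfl⟩; exact ⟨-q, -n, by push_cast; ring⟩

noncomputable def ssRep (x : ℝ) : ℝ := (QuotientAddGroup.mk (s := Hsub) x).out

lemma sub_ssRep_mem (x : ℝ) : x - ssRep x ∈ Hsub := by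
  have h : QuotientAddGroup.mk (s := Hsub) (ssRep x) = QuotientAddGroup.mk x :=
    Quotient.out_eq _
  rw [QuotientAddGroup.eq] at h
  simpa [sub_eq_neg_add] using h

lemma ssRep_eq {x y : ℝ} (h : x - y ∈ Hsub) : ssRep x = ssRep y := by
  have : QuotientAddGroup.mk (s := Hsub) x = QuotientAddGroup.mk y := by
    rw [QuotientAddGroup.eq]
    simpa [neg_add_eq_sub] using Hsub.neg_mem h
  simp [ssRep, this]

lemma coeff_unique {q q' : ℚ} {n m : ℤ}
    (h : (q : ℝ) + n * Real.sqrt 2 = (q' : ℝ) + m * Real.sqrt 2) : n = m := by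
  by_contra hne
  have hnm : ((n : ℝ) - m) ≠ 0 := by
    intro h0
    apply hne
    exact_mod_cast sub_eq_zero.mp (by exact_mod_cast h0)
  apply irrational_sqrt_two
  refine ⟨(q' - q) / (n - m), ?_⟩
  have : ((n : ℝ) - m) * Real.sqrt 2 = (q' : ℝ) - q := by linarith
  push_cast
  field_simp
  linarith

/-- The set of reals whose √2-coefficient relative to the chosen coset
representative is even. -/
def ssDom : Set ℝ :=
  {x | ∃ q : ℚ, ∃ n : ℤ, x - ssRep x = q + ((2 * n : ℤ) : ℝ) * Real.sqrt 2}

/-- The Shelah–Soifer graph has a minimal dominating set. -/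
theorem shelahSoifer_has_minimal_dominating_set :
    ∃ D : Set ℝ, IsMinDomSet ShelahSoiferGraph D := by
  refine ⟨ssDom, ?_, ?_⟩
  · -- dominating
    intro v
    obtain ⟨q, n, hn⟩ := sub_ssRep_mem v
    rcases Int.even_or_odd n with ⟨k, hk⟩ | ⟨k, hk⟩
    · exact Or.inl ⟨q, k, by rw [hn, hk]; push_cast; ring⟩
    · refine Or.inr ⟨v - Real.sqrt 2, ⟨q, k, ?_⟩, Or.inl ⟨0, by push_cast; ring⟩⟩
      have hrep : ssRep (v - Real.sqrt 2) = ssRep v :=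
        ssRep_eq ⟨0, -1, by push_cast; ring⟩
      rw [hrep]
      have h2 : v - Real.sqrt 2 - ssRep v = (v - ssRep v) - Real.sqrt 2 := by ring
      rw [h2, hn, hk]
      push_cast
      ring
  · -- minimal
    rintro D' ⟨hsub, hne⟩ hdom
    obtain ⟨d, hdD, hdD'⟩ := Set.not_subset.mp hne
    rcases hdom d with hd | ⟨y, hyD', hadj⟩
    · exact hdD' hd
    · obtain ⟨q, n, hdn⟩ := hdD
      obtain ⟨q', m, hym⟩ := hsub hyD'
      rcases hadj with ⟨qa, ha⟩ | ⟨qa, ha⟩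
      · have hrep : ssRep y = ssRep d :=
          ssRep_eq ⟨-qa, -1, by push_cast; linear_combination -ha⟩
        have key : ((q' : ℚ) : ℝ) + ((2 * m : ℤ) : ℝ) * Real.sqrt 2
            = ((q - qa : ℚ) : ℝ) + ((2 * n - 1 : ℤ) : ℝ) * Real.sqrt 2 := by
          have h1 : y - ssRep y = (d - ssRep d) - (qa + Real.sqrt 2) := by
            rw [hrep]; linarith
          rw [hym, hdn] at h1
          push_cast at h1 ⊢
          linear_combination h1
        have := coeff_unique key
        omega
      · have hrep : ssRep y = ssRep d :=
          ssRep_eq ⟨-qa, 1, by push_cast; linear_combination -ha⟩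
        have key : ((q' : ℚ) : ℝ) + ((2 * m : ℤ) : ℝ) * Real.sqrt 2
            = ((q - qa : ℚ) : ℝ) + ((2 * n + 1 : ℤ) : ℝ) * Real.sqrt 2 := by
          have h1 : y - ssRep y = (d - ssRep d) - (qa - Real.sqrt 2) := by
            rw [hrep]; linarith
          rw [hym, hdn] at h1
          push_cast at h1 ⊢
          linear_combination h1
        have := coeff_unique key
        omega
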